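/- For every natural number k, the iterated Petersen graph P_10^k is a frame of P_10^{k+1}. -/

import Mathlib

open SimpleGraph

/-- Degree of a vertex, via the cardinality of its neighbor set. -/
noncomputable def hdeg {V : Type*} (G : SimpleGraph V) (v : V) : ℕ :=
  {w | G.Adj v w}.ncard

/-- A cubic graph: every vertex has degree 3. -/
def IsCubic {V : Type*} (G : SimpleGraph V) : Prop := ∀ v, hdeg G v = 3

/-- A 2-connected graph: at least 3 vertices and deleting any vertex leaves it connected. -/
def TwoConnected {V : Type*} (G : SimpleGraph V) : Prop :=
  3 ≤ Nat.card V ∧ ∀ v : V, (G.induce {v}ᶜ).Connected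

/-- A 3-connected graph: at least 4 vertices and deleting any two vertices leaves it connected. -/
def ThreeConnected {V : Type*} (G : SimpleGraph V) : Prop :=
  4 ≤ Nat.card V ∧ ∀ v w : V, v ≠ w → (G.induce ({v, w} : Set V)ᶜ).Connected

/-- Edge list of the Petersen graph on `Fin 10` (vertex 9 has neighbors 4, 6, 7). -/
def petEdges : List (Fin 10 × Fin 10) :=
  [(0,1),(1,2),(2,3),(3,4),(4,0),(0,5),(1,6),(2,7),(3,8),(4,9),(5,7),(7,9),(9,6),(6,8),(8,5)]

/-- The Petersen graph `P₁₀`. -/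
def Pet : SimpleGraph (Fin 10) := SimpleGraph.fromRel (fun a b => (a, b) ∈ petEdges)

/-- Edge list of `P = P₁₀ - z` on `Fin 9` (where `z` was vertex 9);
its three 2-valent vertices are 4, 6, 7. -/
def pEdges : List (Fin 9 × Fin 9) :=
  [(0,1),(1,2),(2,3),(3,4),(4,0),(0,5),(1,6),(2,7),(3,8),(5,7),(6,8),(8,5)]

/-- The graph `P = P₁₀ - z`, the Petersen graph minus one vertex. -/
def Pgr : SimpleGraph (Fin 9) := SimpleGraph.fromRel (fun a b => (a, b) ∈ pEdges)

/-- The three 2-valent vertices of `P` (as targets of the port assignment). -/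
def portIdx : ℕ → Fin 9
  | 0 => 4
  | 1 => 6
  | _ => 7

/-- Port assignment: to which 2-valent vertex of the copy of `P` replacing `u` the
neighbor `v` of `u` gets attached (neighbors are ordered by the injective encoding `enc`). -/
noncomputable def port {V : Type*} (G : SimpleGraph V) (enc : V → ℕ) (u v : V) : Fin 9 :=
  portIdx (Nat.card {w : V | G.Adj u w ∧ enc w < enc v})

/-- Simultaneous `P`-inflation at every vertex of `G`. -/
noncomputable def inflate {V : Type*} (G : SimpleGraph V) (enc : V → ℕ) :
    SimpleGraph (V × Fin 9) where
  Adj a b :=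
    (a.1 = b.1 ∧ Pgr.Adj a.2 b.2) ∨
    (G.Adj a.1 b.1 ∧ a.2 = port G enc a.1 b.1 ∧ b.2 = port G enc b.1 a.1)
  symm := ⟨by
    rintro a b (⟨h1, h2⟩ | ⟨h1, h2, h3⟩)
    · exact Or.inl ⟨h1.symm, h2.symm⟩
    · exact Or.inr ⟨h1.symm, h3, h2⟩⟩
  loopless := ⟨by
    rintro a (⟨-, h⟩ | ⟨h, -, -⟩)
    · exact Pgr.irrefl h
    · exact G.irrefl h⟩

/-- A graph bundled with an injective-style encoding of its vertices into `ℕ`. -/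
structure GE where
  V : Type
  G : SimpleGraph V
  enc : V → ℕ

/-- One round of simultaneous `P`-inflation. -/
noncomputable def step (A : GE) : GE :=
  ⟨A.V × Fin 9, inflate A.G A.enc, fun p => Nat.pair (A.enc p.1) p.2.val⟩

/-- The iterated Petersen graph `P₁₀ᵏ`. -/
noncomputable def ItP10 : ℕ → GE
  | 0 => ⟨Fin 10, Pet, Fin.val⟩
  | k + 1 => step (ItP10 k)

/-- The iterated graph `Pᵏ` (starting from `P = P₁₀ - z`). -/
noncomputable def ItP : ℕ → GE
  | 0 => ⟨Fin 9, Pgr, Fin.val⟩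
  | k + 1 => step (ItP k)

/-- The canonical copy of `P^{k-1}` in `P₁₀ᵏ` containing a given vertex,
recorded by the corresponding vertex of `P₁₀`. -/
noncomputable def baseOf : (k : ℕ) → (ItP10 k).V → Fin 10
  | 0 => id
  | k + 1 => fun p => baseOf k p.1

/-- The parameter `l(G)`: minimum over circuits `C` of the maximum over vertices `v`
of the distance `d(C, v)`. -/
noncomputable def ell {V : Type*} (G : SimpleGraph V) : ℕ :=
  sInf { n | ∃ (v : V) (w : G.Walk v v), w.IsCycle ∧ ∀ u : V, ∃ x ∈ w.support, G.dist x u ≤ n }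

/-- `M` is a matching of `G`: a set of edges of `G`, pairwise not sharing a vertex. -/
def IsMatchingSet {V : Type*} (G : SimpleGraph V) (M : Set (Sym2 V)) : Prop :=
  M ⊆ G.edgeSet ∧ ∀ e ∈ M, ∀ f ∈ M, e ≠ f → ∀ v : V, ¬(v ∈ e ∧ v ∈ f)

/-- Every connected component of `H` has an even number of vertices. -/
def EvenComponents {V : Type*} (H : SimpleGraph V) : Prop :=
  ∀ c : H.ConnectedComponent, Even c.supp.ncard

/-- An `f`-matching: a matching `M` such that every component of `G - M` is
2-connected and has an even number of vertices. -/
def IsFMatching {V : Type*} (G : SimpleGraph V) (M : Set (Sym2 V)) : Prop :=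
  IsMatchingSet G M ∧
    ∀ c : (G.deleteEdges M).ConnectedComponent,
      TwoConnected ((G.deleteEdges M).induce c.supp) ∧ Even c.supp.ncard

/-- A minimal edge cut of `G`: deleting it disconnects `G`, but deleting any
proper subset does not. -/
def IsMinEdgeCut {V : Type*} (G : SimpleGraph V) (E : Set (Sym2 V)) : Prop :=
  E ⊆ G.edgeSet ∧ ¬(G.deleteEdges E).Connected ∧
    ∀ F : Set (Sym2 V), F ⊂ E → (G.deleteEdges F).Connected

/-- `H` is a subdivision of `F`: the vertices of `F` embed into `H` and each edge of `F`
corresponds to a path in `H`, the paths being internally disjoint and covering `H`. -/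
def IsSubdivisionOf {W U : Type*} (H : SimpleGraph W) (F : SimpleGraph U) : Prop :=
  ∃ f : U ↪ W, ∃ p : ∀ u v : U, F.Adj u v → H.Walk (f u) (f v),
    (∀ u v h, (p u v h).IsPath) ∧
    (∀ u v h, ∀ w ∈ (p u v h).support, w ∈ Set.range f → w = f u ∨ w = f v) ∧
    (∀ e : Sym2 W, e ∈ H.edgeSet ↔ ∃ u v h, e ∈ (p u v h).edges) ∧
    (∀ w : W, w ∈ Set.range f ∨ ∃ u v h, w ∈ (p u v h).support) ∧
    (∀ u v h u' v' h', ∀ w : W,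
      w ∈ (p u v h).support → w ∈ (p u' v' h').support →
      w ∈ Set.range f ∨ (u = u' ∧ v = v') ∨ (u = v' ∧ v = u'))

/-- Each component of `F` is an even circuit or a 2-connected cubic graph. -/
def GoodFrameComponents {U : Type*} (F : SimpleGraph U) : Prop :=
  ∀ c : F.ConnectedComponent,
    ((F.induce c.supp).Connected ∧ (∀ v, hdeg (F.induce c.supp) v = 2) ∧ Even c.supp.ncard) ∨
    (TwoConnected (F.induce c.supp) ∧ IsCubic (F.induce c.supp))

/-- `F` is a frame of `G`. -/
def IsFrame {U V : Type*} (F : SimpleGraph U) (G : SimpleGraph V) : Prop :=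
  GoodFrameComponents F ∧
    ∃ H : SimpleGraph V, H ≤ G ∧ IsSubdivisionOf H F ∧ EvenComponents H

/-- A proper 3-edge-coloring of `G`. -/
def ProperEdgeColoring {V : Type*} (G : SimpleGraph V) (f : Sym2 V → Fin 3) : Prop :=
  ∀ u v w : V, G.Adj u v → G.Adj u w → v ≠ w → f s(u, v) ≠ f s(u, w)

/-- The spanning subgraph of edges whose color is different from `c`
(i.e. the union of the other two color classes). -/
def twoClassSub {V : Type*} (G : SimpleGraph V) (f : Sym2 V → Fin 3) (c : Fin 3) :
    SimpleGraph V where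
  Adj u v := G.Adj u v ∧ f s(u, v) ≠ c
  symm := ⟨by
    rintro u v ⟨h1, h2⟩
    exact ⟨h1.symm, by rwa [Sym2.eq_swap]⟩⟩
  loopless := ⟨fun v h => G.irrefl h.1⟩

/-- A Kotzig graph: a cubic graph with a proper 3-edge-coloring in which any two
color classes form a hamiltonian circuit. -/
def IsKotzig {V : Type*} (G : SimpleGraph V) : Prop :=
  IsCubic G ∧ ∃ f : Sym2 V → Fin 3, ProperEdgeColoring G f ∧
    ∀ c : Fin 3, (twoClassSub G f c).Connected ∧ ∀ v, hdeg (twoClassSub G f c) v = 2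

/-- The family `Fam` is an even subdivision-factor of `G`. -/
def IsEvenSubdivFactor {ι : Type*} (Fam : ι → Σ n : ℕ, SimpleGraph (Fin n))
    {V : Type*} (G : SimpleGraph V) : Prop :=
  ∃ H : SimpleGraph V, H ≤ G ∧ ∀ c : H.ConnectedComponent,
    Even c.supp.ncard ∧ ∃ i, IsSubdivisionOf (H.induce c.supp) (Fam i).2

namespace F16

/-! ### Section 1: generic lemmas -/
section Generic
variable {V : Type*} {G : SimpleGraph V} {s : Set V}

lemma walk_induce : ∀ {a b : V} (w : G.Walk a b), (∀ x ∈ w.support, x ∈ s) →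
    ∀ (ha : a ∈ s) (hb : b ∈ s), (G.induce s).Reachable ⟨a, ha⟩ ⟨b, hb⟩ := by
  intro a b w
  induction w with
  | nil => intro _ ha hb; rfl
  | cons h w ih =>
    intro hs ha hb
    rename_i u c d
    have hc : c ∈ s := hs c (by simp [Walk.support_cons])
    have : (G.induce s).Adj ⟨u, ha⟩ ⟨c, hc⟩ := h
    exact this.reachable.trans (ih (fun x hx => hs x (by simp [Walk.support_cons, hx])) hc hb)

lemma induce_connected (hne : s.Nonempty)
    (h : ∀ a ∈ s, ∀ b ∈ s, ∃ w : G.Walk a b, ∀ x ∈ w.support, x ∈ s) :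
    (G.induce s).Connected := by
  rw [connected_iff]
  refine ⟨fun a b => ?_, ⟨⟨hne.choose, hne.choose_spec⟩⟩⟩
  obtain ⟨w, hw⟩ := h a.1 a.2 b.1 b.2
  simpa using walk_induce w hw a.2 b.2

lemma walk_from_induce : ∀ {a b : ↥s} (w : (G.induce s).Walk a b),
    ∃ w' : G.Walk a.1 b.1, ∀ x ∈ w'.support, x ∈ s := by
  intro a b w
  induction w with
  | nil => exact ⟨Walk.nil, by rintro x hx; simp at hx; subst hx; exact Subtype.mem _⟩
  | cons h w ih =>
    rename_i u c d
    obtain ⟨w', hw'⟩ := ih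
    have h : G.Adj u.1 c.1 := h
    refine ⟨Walk.cons h w', ?_⟩
    intro x hx
    rw [Walk.support_cons, List.mem_cons] at hx
    rcases hx with hx | hx
    · subst hx; exact u.2
    · exact hw' x hx

lemma tree_walk (r : V) (par : V → V) (rk : V → ℕ)
    (h : ∀ x ∈ s, x = r ∨ (G.Adj x (par x) ∧ par x ∈ s ∧ rk (par x) < rk x)) :
    ∀ x ∈ s, ∃ w : G.Walk x r, ∀ y ∈ w.support, y ∈ s := by
  have main : ∀ n, ∀ x ∈ s, rk x < n → ∃ w : G.Walk x r, ∀ y ∈ w.support, y ∈ s := by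
    intro n
    induction n with
    | zero => intro x _ hx; omega
    | succ n ih =>
      intro x hx hrk
      rcases h x hx with rfl | ⟨hadj, hmem, hlt⟩
      · exact ⟨Walk.nil, by intro y hy; simp at hy; subst hy; exact hx⟩
      · obtain ⟨w, hw⟩ := ih (par x) hmem (by omega)
        refine ⟨Walk.cons hadj w, ?_⟩
        intro y hy
        rw [Walk.support_cons, List.mem_cons] at hy
        rcases hy with hy | hy
        · subst hy; exact hx
        · exact hw y hy
  exact fun x hx => main (rk x + 1) x hx (by omega)

lemma supp_univ (h : G.Connected) (c : G.ConnectedComponent) : c.supp = Set.univ := by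
  induction c using SimpleGraph.ConnectedComponent.ind with
  | _ w =>
    ext v
    simp only [ConnectedComponent.mem_supp_iff, ConnectedComponent.eq, Set.mem_univ, iff_true]
    exact h.preconnected v w

end Generic

/-! ### Section 2: concrete graphs -/

instance : DecidableRel Pgr.Adj := fun a b =>
  decidable_of_iff' _ (SimpleGraph.fromRel_adj _ a b)
instance : DecidableRel Pet.Adj := fun a b =>
  decidable_of_iff' _ (SimpleGraph.fromRel_adj _ a b)

def spEdges : List (Fin 9 × Fin 9) := [(0,4),(0,1),(1,2),(2,3),(3,8),(8,6),(0,5),(5,7)]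
def spider : SimpleGraph (Fin 9) := SimpleGraph.fromRel (fun a b => (a, b) ∈ spEdges)
instance : DecidableRel spider.Adj := fun a b =>
  decidable_of_iff' _ (SimpleGraph.fromRel_adj _ a b)

lemma spider_le_Pgr : ∀ x y : Fin 9, spider.Adj x y → Pgr.Adj x y := by decide

def armW : (t : Fin 9) → spider.Walk 0 t
  | 0 => .nil
  | 1 => .cons (by decide : spider.Adj 0 1) .nil
  | 2 => .cons (by decide : spider.Adj 0 1) (.cons (by decide : spider.Adj 1 2) .nil)
  | 3 => .cons (by decide : spider.Adj 0 1) (.cons (by decide : spider.Adj 1 2)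
      (.cons (by decide : spider.Adj 2 3) .nil))
  | 4 => .cons (by decide : spider.Adj 0 4) .nil
  | 5 => .cons (by decide : spider.Adj 0 5) .nil
  | 6 => .cons (by decide : spider.Adj 0 1) (.cons (by decide : spider.Adj 1 2)
      (.cons (by decide : spider.Adj 2 3) (.cons (by decide : spider.Adj 3 8)
      (.cons (by decide : spider.Adj 8 6) .nil))))
  | 7 => .cons (by decide : spider.Adj 0 5) (.cons (by decide : spider.Adj 5 7) .nil)
  | 8 => .cons (by decide : spider.Adj 0 1) (.cons (by decide : spider.Adj 1 2)
      (.cons (by decide : spider.Adj 2 3) (.cons (by decide : spider.Adj 3 8) .nil)))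

def armOf : Fin 9 → Fin 9
  | 0 => 0
  | 4 => 4
  | 5 => 7
  | 7 => 7
  | _ => 6

lemma armW_nodup : ∀ t : Fin 9, (armW t).support.Nodup := by decide
lemma armW_arm : ∀ t x : Fin 9, x ∈ (armW t).support → x ≠ 0 → armOf x = armOf t := by decide
lemma armOf_mem : ∀ x : Fin 9, x ≠ 0 →
    (armOf x = 4 ∨ armOf x = 6 ∨ armOf x = 7) ∧ x ∈ (armW (armOf x)).support := by decide
lemma armOf_fix : ∀ t : Fin 9, t = 4 ∨ t = 6 ∨ t = 7 → armOf t = t := by decide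
lemma spider_edge_arm : ∀ x y : Fin 9, spider.Adj x y →
    ∃ t : Fin 9, (t = 4 ∨ t = 6 ∨ t = 7) ∧ s(x, y) ∈ (armW t).edges := by decide

def par9w : Fin 9 → Fin 9 := ![0, 0, 1, 4, 0, 0, 1, 5, 5]
def rk9w : Fin 9 → ℕ := ![0, 1, 2, 2, 1, 1, 2, 2, 2]
lemma pgr_tree : ∀ x : Fin 9, x = 0 ∨ (Pgr.Adj x (par9w x) ∧ rk9w (par9w x) < rk9w x) := by
  decide

lemma pgr_walk (x y : Fin 9) : Nonempty (Pgr.Walk x y) := by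
  have h := tree_walk (G := Pgr) (s := Set.univ) 0 par9w rk9w
    (fun z _ => by rcases pgr_tree z with h | h; exacts [Or.inl h, Or.inr ⟨h.1, trivial, h.2⟩])
  obtain ⟨wx, -⟩ := h x trivial
  obtain ⟨wy, -⟩ := h y trivial
  exact ⟨wx.append wy.reverse⟩

def exitP : Fin 9 → Fin 9 := fun x0 => if x0 = 4 then 6 else 4
lemma exitP_spec : ∀ x0 : Fin 9, (exitP x0 = 4 ∨ exitP x0 = 6 ∨ exitP x0 = 7) ∧ exitP x0 ≠ x0 := by
  decide

def par9 : Fin 9 → Fin 9 → Fin 9 := ![![0, 2, 3, 4, 4, 8, 8, 2, 3], ![4, 0, 3, 4, 4, 0, 8, 5, 3], ![4, 0, 0, 4, 4, 0, 1, 5, 3], ![4, 0, 1, 0, 4, 0, 1, 5, 5], ![1, 6, 1, 8, 0, 8, 6, 2, 6], ![4, 0, 3, 4, 4, 0, 1, 2, 3], ![4, 0, 3, 4, 4, 0, 0, 5, 3], ![4, 0, 3, 4, 4, 0, 1, 0, 3], ![4, 0, 3, 4, 4, 0, 1, 5, 0]]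
def rk9 : Fin 9 → Fin 9 → ℕ := ![![0, 3, 2, 1, 0, 3, 3, 3, 2], ![1, 0, 2, 1, 0, 2, 3, 3, 2], ![1, 2, 0, 1, 0, 2, 3, 3, 2], ![1, 2, 3, 0, 0, 2, 3, 3, 3], ![2, 1, 2, 2, 0, 2, 0, 3, 1], ![1, 2, 2, 1, 0, 0, 3, 3, 2], ![1, 2, 2, 1, 0, 2, 0, 3, 2], ![1, 2, 2, 1, 0, 2, 3, 0, 2], ![1, 2, 2, 1, 0, 2, 3, 3, 0]]
lemma pgr_del_tree : ∀ x0 x : Fin 9, x ≠ x0 → x = exitP x0 ∨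
    (Pgr.Adj x (par9 x0 x) ∧ par9 x0 x ≠ x0 ∧ rk9 x0 (par9 x0 x) < rk9 x0 x) := by decide

lemma pgr_del_walk (x0 x : Fin 9) (hx : x ≠ x0) :
    ∃ w : Pgr.Walk x (exitP x0), ∀ y ∈ w.support, y ≠ x0 := by
  have h := tree_walk (G := Pgr) (s := {y : Fin 9 | y ≠ x0}) (exitP x0) (par9 x0) (rk9 x0)
    (fun z hz => by
      rcases pgr_del_tree x0 z hz with h | h
      exacts [Or.inl h, Or.inr ⟨h.1, h.2.1, h.2.2⟩])
  exact h x hx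

def par10w : Fin 10 → Fin 10 := ![0, 0, 1, 4, 0, 0, 1, 5, 5, 4]
def rk10w : Fin 10 → ℕ := ![0, 1, 2, 2, 1, 1, 2, 2, 2, 2]
lemma pet_tree : ∀ x : Fin 10, x = 0 ∨ (Pet.Adj x (par10w x) ∧ rk10w (par10w x) < rk10w x) := by
  decide

def rt10 : Fin 10 → Fin 10 := fun v => if v = 0 then 1 else 0
def par10 : Fin 10 → Fin 10 → Fin 10 := ![![0, 1, 1, 2, 3, 7, 1, 2, 6, 6], ![0, 0, 3, 4, 0, 0, 9, 5, 5, 4], ![0, 0, 0, 4, 0, 0, 1, 5, 5, 4], ![0, 0, 1, 0, 0, 0, 1, 5, 5, 4], ![0, 0, 1, 2, 0, 0, 1, 5, 5, 6], ![0, 0, 1, 4, 0, 0, 1, 2, 6, 4], ![0, 0, 1, 4, 0, 0, 0, 5, 5, 4], ![0, 0, 1, 4, 0, 0, 1, 0, 5, 4], ![0, 0, 1, 4, 0, 0, 1, 5, 0, 4], ![0, 0, 1, 4, 0, 0, 1, 5, 5, 0]]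
def rk10 : Fin 10 → Fin 10 → ℕ := ![![0, 0, 1, 2, 3, 3, 1, 2, 2, 2], ![0, 0, 3, 2, 1, 1, 3, 2, 2, 2], ![0, 1, 0, 2, 1, 1, 2, 2, 2, 2], ![0, 1, 2, 0, 1, 1, 2, 2, 2, 2], ![0, 1, 2, 3, 0, 1, 2, 2, 2, 3], ![0, 1, 2, 2, 1, 0, 2, 3, 3, 2], ![0, 1, 2, 2, 1, 1, 0, 2, 2, 2], ![0, 1, 2, 2, 1, 1, 2, 0, 2, 2], ![0, 1, 2, 2, 1, 1, 2, 2, 0, 2], ![0, 1, 2, 2, 1, 1, 2, 2, 2, 0]]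
lemma pet_del_tree : ∀ v x : Fin 10, x ≠ v → x = rt10 v ∨
    (Pet.Adj x (par10 v x) ∧ par10 v x ≠ v ∧ rk10 v (par10 v x) < rk10 v x) := by decide

lemma pet_cubic_fin : ∀ v : Fin 10, (Finset.univ.filter (Pet.Adj v ·)).card = 3 := by decide
lemma pgr2 : ∀ x : Fin 9, x = 4 ∨ x = 6 ∨ x = 7 →
    ∃ p q : Fin 9, p ≠ q ∧ ∀ y, Pgr.Adj x y ↔ (y = p ∨ y = q) := by decide
lemma pgr3 : ∀ x : Fin 9, ¬(x = 4 ∨ x = 6 ∨ x = 7) →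
    ∃ p q r : Fin 9, p ≠ q ∧ p ≠ r ∧ q ≠ r ∧ ∀ y, Pgr.Adj x y ↔ (y = p ∨ y = q ∨ y = r) := by
  decide

/-! ### Section 3: port lemmas -/
section Port
variable {V : Type*} {G : SimpleGraph V} {enc : V → ℕ}

lemma port_compute (u v : V) {S : Set V} (hS : {w | G.Adj u w ∧ enc w < enc v} = S) :
    port G enc u v = portIdx S.ncard := by
  rw [port, Nat.card_coe_set_eq, hS]

lemma master (hinj : Function.Injective enc) (hcub : IsCubic G) (u : V) :
    ∃ a b c : V, G.Adj u a ∧ G.Adj u b ∧ G.Adj u c ∧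
      a ≠ b ∧ a ≠ c ∧ b ≠ c ∧
      port G enc u a = 4 ∧ port G enc u b = 6 ∧ port G enc u c = 7 ∧
      (∀ v, G.Adj u v → v = a ∨ v = b ∨ v = c) := by
  have h3 : {w | G.Adj u w}.ncard = 3 := hcub u
  obtain ⟨x, y, z, hxy, hxz, hyz, hset⟩ := Set.ncard_eq_three.mp h3
  obtain ⟨a, b, c, hab, hbc, hperm⟩ :
      ∃ a b c : V, enc a < enc b ∧ enc b < enc c ∧ ({x, y, z} : Set V) = {a, b, c} := by
    have exy := hinj.ne_iff.mpr hxy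
    have exz := hinj.ne_iff.mpr hxz
    have eyz := hinj.ne_iff.mpr hyz
    rcases Nat.lt_or_ge (enc x) (enc y) with h1 | h1 <;>
      rcases Nat.lt_or_ge (enc y) (enc z) with h2 | h2 <;>
      rcases Nat.lt_or_ge (enc x) (enc z) with h3' | h3'
    · exact ⟨x, y, z, h1, h2, rfl⟩
    · exact ⟨x, y, z, h1, h2, rfl⟩
    · exact ⟨x, z, y, h3', by omega, by ext w; simp; tauto⟩
    · exact ⟨z, x, y, by omega, h1, by ext w; simp; tauto⟩
    · exact ⟨y, x, z, by omega, h3', by ext w; simp; tauto⟩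
    · exact ⟨y, z, x, by omega, by omega, by ext w; simp; tauto⟩
    · omega
    · exact ⟨z, y, x, by omega, by omega, by ext w; simp; tauto⟩
  rw [hperm] at hset
  have hadj : ∀ v, G.Adj u v ↔ v ∈ ({a, b, c} : Set V) := by
    intro v
    constructor
    · intro h; rw [← hset]; exact h
    · intro h; have : v ∈ {w | G.Adj u w} := hset ▸ h; exact this
  have hne_ab : a ≠ b := fun h => by subst h; omega
  have hne_ac : a ≠ c := fun h => by subst h; omega
  have hne_bc : b ≠ c := fun h => by subst h; omega
  have ha : G.Adj u a := (hadj a).mpr (by simp)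
  have hb : G.Adj u b := (hadj b).mpr (by simp)
  have hc : G.Adj u c := (hadj c).mpr (by simp)
  refine ⟨a, b, c, ha, hb, hc, hne_ab, hne_ac, hne_bc, ?_, ?_, ?_, ?_⟩
  · have hS : {w | G.Adj u w ∧ enc w < enc a} = (∅ : Set V) := by
      refine Set.eq_empty_iff_forall_notMem.mpr fun w => ?_
      simp only [Set.mem_setOf_eq, not_and]
      intro hw hlt
      rcases (hadj w).mp hw with rfl | rfl | rfl <;> omega
    rw [port_compute u a hS, Set.ncard_empty]; rfl
  · have hS : {w | G.Adj u w ∧ enc w < enc b} = ({a} : Set V) := by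
      ext w
      simp only [Set.mem_setOf_eq, Set.mem_singleton_iff]
      constructor
      · rintro ⟨hw, hlt⟩
        rcases (hadj w).mp hw with rfl | rfl | rfl
        · rfl
        · omega
        · omega
      · rintro rfl; exact ⟨ha, hab⟩
    rw [port_compute u b hS, Set.ncard_singleton]; rfl
  · have hS : {w | G.Adj u w ∧ enc w < enc c} = ({a, b} : Set V) := by
      ext w
      simp only [Set.mem_setOf_eq, Set.mem_insert_iff, Set.mem_singleton_iff]
      constructor
      · rintro ⟨hw, hlt⟩
        rcases (hadj w).mp hw with rfl | rfl | rfl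
        · exact Or.inl rfl
        · exact Or.inr rfl
        · omega
      · rintro (rfl | rfl)
        · exact ⟨ha, by omega⟩
        · exact ⟨hb, hbc⟩
    rw [port_compute u c hS, Set.ncard_pair hne_ab]; rfl
  · intro v hv
    simpa using (hadj v).mp hv

lemma port_mem (hinj : Function.Injective enc) (hcub : IsCubic G) {u v : V} (h : G.Adj u v) :
    port G enc u v = 4 ∨ port G enc u v = 6 ∨ port G enc u v = 7 := by
  obtain ⟨a, b, c, _, _, _, _, _, _, pa, pb, pc, hcl⟩ := master hinj hcub u
  rcases hcl v h with rfl | rfl | rfl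
  · exact Or.inl pa
  · exact Or.inr (Or.inl pb)
  · exact Or.inr (Or.inr pc)

lemma port_inj (hinj : Function.Injective enc) (hcub : IsCubic G) {u v v' : V}
    (h : G.Adj u v) (h' : G.Adj u v') (hp : port G enc u v = port G enc u v') : v = v' := by
  obtain ⟨a, b, c, _, _, _, _, _, _, pa, pb, pc, hcl⟩ := master hinj hcub u
  rcases hcl v h with rfl | rfl | rfl <;> rcases hcl v' h' with rfl | rfl | rfl <;>
    first
      | rfl
      | (exfalso; rw [pa, pb] at hp; exact absurd hp (by decide))
      | (exfalso; rw [pa, pc] at hp; exact absurd hp (by decide))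
      | (exfalso; rw [pb, pa] at hp; exact absurd hp (by decide))
      | (exfalso; rw [pb, pc] at hp; exact absurd hp (by decide))
      | (exfalso; rw [pc, pa] at hp; exact absurd hp (by decide))
      | (exfalso; rw [pc, pb] at hp; exact absurd hp (by decide))

lemma port_surj (hinj : Function.Injective enc) (hcub : IsCubic G) (u : V) (t : Fin 9)
    (ht : t = 4 ∨ t = 6 ∨ t = 7) : ∃ v, G.Adj u v ∧ port G enc u v = t := by
  obtain ⟨a, b, c, ha, hb, hc, _, _, _, pa, pb, pc, _⟩ := master hinj hcub u
  rcases ht with rfl | rfl | rfl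
  · exact ⟨a, ha, pa⟩
  · exact ⟨b, hb, pb⟩
  · exact ⟨c, hc, pc⟩

end Port

/-! ### Section 4: the subdivision graph -/
section HH
variable {V : Type*} (G : SimpleGraph V) (enc : V → ℕ)

def HH : SimpleGraph (V × Fin 9) where
  Adj a b :=
    (a.1 = b.1 ∧ spider.Adj a.2 b.2) ∨
    (G.Adj a.1 b.1 ∧ a.2 = port G enc a.1 b.1 ∧ b.2 = port G enc b.1 a.1)
  symm := ⟨by
    rintro a b (⟨h1, h2⟩ | ⟨h1, h2, h3⟩)
    · exact Or.inl ⟨h1.symm, h2.symm⟩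
    · exact Or.inr ⟨h1.symm, h3, h2⟩⟩
  loopless := ⟨by
    rintro a (⟨-, h⟩ | ⟨h, -, -⟩)
    · exact spider.irrefl h
    · exact G.irrefl h⟩

lemma HH_le : HH G enc ≤ inflate G enc := by
  rintro a b (⟨h1, h2⟩ | h)
  · exact Or.inl ⟨h1, spider_le_Pgr _ _ h2⟩
  · exact Or.inr h

def copyHom (u : V) : spider →g HH G enc where
  toFun := fun x => (u, x)
  map_rel' := fun h => Or.inl ⟨rfl, h⟩

def parm (u : V) (t : Fin 9) : (HH G enc).Walk (u, 0) (u, t) :=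
  (armW t).map (copyHom G enc u)

lemma parm_support (u : V) (t : Fin 9) :
    (parm G enc u t).support = (armW t).support.map (fun x => (u, x)) := by
  exact Walk.support_map (f := copyHom G enc u) (p := armW t)

lemma parm_edges (u : V) (t : Fin 9) :
    (parm G enc u t).edges = (armW t).edges.map (Sym2.map (fun x => (u, x))) := by
  exact Walk.edges_map (f := copyHom G enc u) (p := armW t)

def fEmb : V ↪ V × Fin 9 where
  toFun := fun u => (u, (0 : Fin 9))
  inj' := fun a b h => congrArg Prod.fst h

variable {G} {u v : V}

lemma HH_adj_of (enc : V → ℕ) {a b : V} {x y : Fin 9} (h : G.Adj a b)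
    (hx : x = port G enc a b) (hy : y = port G enc b a) : (HH G enc).Adj (a, x) (b, y) :=
  Or.inr ⟨h, hx, hy⟩

lemma inflate_adj_of (enc : V → ℕ) {a b : V} {x y : Fin 9} (h : G.Adj a b)
    (hx : x = port G enc a b) (hy : y = port G enc b a) : (inflate G enc).Adj (a, x) (b, y) :=
  Or.inr ⟨h, hx, hy⟩

noncomputable def pw (enc : V → ℕ) (h : G.Adj u v) : (HH G enc).Walk (u, 0) (v, 0) :=
  (parm G enc u (port G enc u v)).append
    (Walk.cons (HH_adj_of enc h rfl rfl : (HH G enc).Adj (u, port G enc u v) (v, port G enc v u))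
      (parm G enc v (port G enc v u)).reverse)

lemma pw_support_eq (enc : V → ℕ) (h : G.Adj u v) :
    (pw enc h).support = (armW (port G enc u v)).support.map (fun x => (u, x)) ++
      ((armW (port G enc v u)).support.map (fun x => (v, x))).reverse := by
  rw [pw, Walk.support_append, Walk.support_cons, List.tail_cons, Walk.support_reverse,
    parm_support, parm_support]

lemma mem_pw_support (enc : V → ℕ) (h : G.Adj u v) (p : V × Fin 9) :
    p ∈ (pw enc h).support ↔
      (∃ x ∈ (armW (port G enc u v)).support, p = (u, x)) ∨
      (∃ x ∈ (armW (port G enc v u)).support, p = (v, x)) := by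
  rw [pw_support_eq, List.mem_append, List.mem_reverse, List.mem_map, List.mem_map]
  constructor
  · rintro (⟨x, hx, rfl⟩ | ⟨x, hx, rfl⟩)
    · exact Or.inl ⟨x, hx, rfl⟩
    · exact Or.inr ⟨x, hx, rfl⟩
  · rintro (⟨x, hx, rfl⟩ | ⟨x, hx, rfl⟩)
    · exact Or.inl ⟨x, hx, rfl⟩
    · exact Or.inr ⟨x, hx, rfl⟩

lemma pw_edges_eq (enc : V → ℕ) (h : G.Adj u v) :
    (pw enc h).edges = (armW (port G enc u v)).edges.map (Sym2.map (fun x => (u, x))) ++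
      (s((u, port G enc u v), (v, port G enc v u)) ::
        ((armW (port G enc v u)).edges.map (Sym2.map (fun x => (v, x)))).reverse) := by
  rw [pw, Walk.edges_append, Walk.edges_cons, Walk.edges_reverse, parm_edges, parm_edges]

lemma pw_isPath (enc : V → ℕ) (h : G.Adj u v) : (pw enc h).IsPath := by
  apply Walk.IsPath.mk'
  rw [pw_support_eq]
  have huv : u ≠ v := G.ne_of_adj h
  have hinj1 : Function.Injective (fun x : Fin 9 => (u, x)) := fun a b hab =>
    congrArg Prod.snd hab
  have hinj2 : Function.Injective (fun x : Fin 9 => (v, x)) := fun a b hab =>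
    congrArg Prod.snd hab
  refine List.Nodup.append ?_ ?_ ?_
  · exact List.Nodup.map hinj1 (armW_nodup _)
  · exact List.nodup_reverse.mpr (List.Nodup.map hinj2 (armW_nodup _))
  · intro p hp hq
    rw [List.mem_map] at hp
    rw [List.mem_reverse, List.mem_map] at hq
    obtain ⟨x, -, rfl⟩ := hp
    obtain ⟨y, -, hy⟩ := hq
    exact huv (congrArg Prod.fst hy).symm

end HH

/-! ### Section 5: subdivision -/
section Main
variable {V : Type*} {G : SimpleGraph V} {enc : V → ℕ}

lemma subdivision (hinj : Function.Injective enc) (hcub : IsCubic G) :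
    IsSubdivisionOf (HH G enc) G := by
  refine ⟨fEmb, fun u v h => pw enc h, fun u v h => pw_isPath enc h, ?_, ?_, ?_, ?_⟩
  · intro u v h w hw hr
    obtain ⟨z, rfl⟩ := hr
    rcases (mem_pw_support enc h _).mp hw with ⟨x, hx, hpe⟩ | ⟨x, hx, hpe⟩
    · left
      have hz : z = u := congrArg Prod.fst hpe
      rw [show fEmb z = (z, (0 : Fin 9)) from rfl, hz]; rfl
    · right
      have hz : z = v := congrArg Prod.fst hpe
      rw [show fEmb z = (z, (0 : Fin 9)) from rfl, hz]; rfl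
  · intro e
    constructor
    · intro he
      induction e with
      | _ p q =>
        obtain ⟨a, x⟩ := p
        obtain ⟨b, y⟩ := q
        rcases (SimpleGraph.mem_edgeSet _).mp he with ⟨h1, h2⟩ | ⟨h1, h2, h3⟩
        · simp only at h1 h2
          subst h1
          obtain ⟨t, ht, hmem⟩ := spider_edge_arm x y h2
          obtain ⟨v', hv', hport⟩ := port_surj hinj hcub a t ht
          refine ⟨a, v', hv', ?_⟩
          show s((a, x), (a, y)) ∈ (pw enc hv').edges
          rw [pw_edges_eq]
          apply List.mem_append_left
          rw [List.mem_map]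
          refine ⟨s(x, y), by rw [hport]; exact hmem, ?_⟩
          rfl
        · simp only at h1 h2 h3
          subst h2; subst h3
          refine ⟨a, b, h1, ?_⟩
          show _ ∈ (pw enc h1).edges
          rw [pw_edges_eq]
          apply List.mem_append_right
          exact List.mem_cons_self
    · rintro ⟨u, v, h, he⟩
      exact Walk.edges_subset_edgeSet _ he
  · rintro ⟨a, x⟩
    by_cases hx : x = 0
    · subst hx; exact Or.inl ⟨a, rfl⟩
    · right
      obtain ⟨ht, hmem⟩ := armOf_mem x hx
      obtain ⟨v', hv', hport⟩ := port_surj hinj hcub a (armOf x) ht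
      exact ⟨a, v', hv', (mem_pw_support enc hv' _).mpr
        (Or.inl ⟨x, by rw [hport]; exact hmem, rfl⟩)⟩
  · intro u v h u' v' h' w hw hw'
    by_cases h0 : w.2 = 0
    · exact Or.inl ⟨w.1, by rw [show fEmb w.1 = (w.1, (0 : Fin 9)) from rfl, ← h0]⟩
    · right
      have key : ∀ {a b : V} (hab : G.Adj a b), w ∈ (pw enc hab).support →
          (w.1 = a ∧ port G enc a b = armOf w.2) ∨
          (w.1 = b ∧ port G enc b a = armOf w.2) := by
        intro a b hab hmem
        rcases (mem_pw_support enc hab w).mp hmem with ⟨x, hx, rfl⟩ | ⟨x, hx, rfl⟩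
        · left
          refine ⟨rfl, ?_⟩
          have h2 := armW_arm _ x hx h0
          rw [armOf_fix _ (port_mem hinj hcub hab)] at h2
          exact h2.symm
        · right
          refine ⟨rfl, ?_⟩
          have h2 := armW_arm _ x hx h0
          rw [armOf_fix _ (port_mem hinj hcub hab.symm)] at h2
          exact h2.symm
      rcases key h hw with ⟨e1, e2⟩ | ⟨e1, e2⟩ <;> rcases key h' hw' with ⟨f1, f2⟩ | ⟨f1, f2⟩
      · left
        have huu : u = u' := e1 ▸ f1 ▸ rfl
        subst huu
        exact ⟨rfl, port_inj hinj hcub h h' (e2.trans f2.symm)⟩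
      · right
        have huv : u = v' := e1 ▸ f1 ▸ rfl
        subst huv
        exact ⟨rfl, (port_inj hinj hcub h h'.symm (e2.trans f2.symm)).symm ▸ rfl⟩
      · right
        have hvu : v = u' := e1 ▸ f1 ▸ rfl
        subst hvu
        exact ⟨port_inj hinj hcub h.symm h' (e2.trans f2.symm), rfl⟩
      · left
        have hvv : v = v' := e1 ▸ f1 ▸ rfl
        subst hvv
        exact ⟨port_inj hinj hcub h.symm h'.symm (e2.trans f2.symm), rfl⟩

lemma HH_connected (hconn : G.Connected) : (HH G enc).Connected := by
  rw [connected_iff]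
  constructor
  · rintro ⟨a, x⟩ ⟨b, y⟩
    have h1 : (HH G enc).Reachable (a, x) (a, 0) := ⟨(parm G enc a x).reverse⟩
    have h2 : (HH G enc).Reachable (b, 0) (b, y) := ⟨parm G enc b y⟩
    have mid : ∀ {a b : V}, G.Walk a b → (HH G enc).Reachable (a, 0) (b, 0) := by
      intro a b w
      induction w with
      | nil => exact Reachable.refl _
      | cons hab w ih => exact (Reachable.trans ⟨pw enc hab⟩ ih)
    obtain ⟨w⟩ := hconn.preconnected a b
    exact (h1.trans (mid w)).trans h2
  · obtain ⟨v⟩ := hconn.nonempty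
    exact ⟨(v, 0)⟩

lemma card_prod9 : Nat.card (V × Fin 9) = Nat.card V * 9 := by
  rw [Nat.card_prod]
  simp [Nat.card_eq_fintype_card]

lemma HH_even (heven : Even (Nat.card V)) (hc : (HH G enc).Connected) :
    EvenComponents (HH G enc) := by
  intro c
  rw [supp_univ hc c, Set.ncard_univ, card_prod9]
  exact heven.mul_right 9

lemma inflate_cubic (hinj : Function.Injective enc) (hcub : IsCubic G) :
    IsCubic (inflate G enc) := by
  rintro ⟨u, x⟩
  show {w | (inflate G enc).Adj (u, x) w}.ncard = 3
  by_cases hx : x = 4 ∨ x = 6 ∨ x = 7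
  · obtain ⟨p, q, hpq, hiff⟩ := pgr2 x hx
    obtain ⟨v, hv, hport⟩ := port_surj hinj hcub u x hx
    have hset : {w | (inflate G enc).Adj (u, x) w} =
        {(u, p), (u, q), (v, port G enc v u)} := by
      ext ⟨b, y⟩
      simp only [Set.mem_setOf_eq, Set.mem_insert_iff, Set.mem_singleton_iff]
      constructor
      · rintro (⟨h1, h2⟩ | ⟨h1, h2, h3⟩)
        · simp only at h1 h2
          subst h1
          rcases (hiff y).mp h2 with rfl | rfl
          · exact Or.inl rfl
          · exact Or.inr (Or.inl rfl)
        · simp only at h1 h2 h3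
          have hb : v = b := port_inj hinj hcub hv h1 (hport.trans h2)
          subst hb
          exact Or.inr (Or.inr (by rw [h3]))
      · rintro (hE | hE | hE) <;>
          obtain ⟨rfl, rfl⟩ := Prod.mk.inj hE
        · exact Or.inl ⟨rfl, (hiff _).mpr (Or.inl rfl)⟩
        · exact Or.inl ⟨rfl, (hiff _).mpr (Or.inr rfl)⟩
        · exact Or.inr ⟨hv, hport.symm, rfl⟩
    rw [hset]
    refine Set.ncard_eq_three.mpr ⟨_, _, _, ?_, ?_, ?_, rfl⟩
    · exact fun hE => hpq (congrArg Prod.snd hE)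
    · exact fun hE => (G.ne_of_adj hv) (congrArg Prod.fst hE)
    · exact fun hE => (G.ne_of_adj hv) (congrArg Prod.fst hE)
  · obtain ⟨p, q, r, hpq, hpr, hqr, hiff⟩ := pgr3 x hx
    have hset : {w | (inflate G enc).Adj (u, x) w} = {(u, p), (u, q), (u, r)} := by
      ext ⟨b, y⟩
      simp only [Set.mem_setOf_eq, Set.mem_insert_iff, Set.mem_singleton_iff]
      constructor
      · rintro (⟨h1, h2⟩ | ⟨h1, h2, h3⟩)
        · simp only at h1 h2
          subst h1
          rcases (hiff y).mp h2 with rfl | rfl | rfl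
          · exact Or.inl rfl
          · exact Or.inr (Or.inl rfl)
          · exact Or.inr (Or.inr rfl)
        · simp only at h1 h2 h3
          exact absurd (h2 ▸ port_mem hinj hcub h1) hx
      · rintro (hE | hE | hE) <;>
          obtain ⟨rfl, rfl⟩ := Prod.mk.inj hE
        · exact Or.inl ⟨rfl, (hiff _).mpr (Or.inl rfl)⟩
        · exact Or.inl ⟨rfl, (hiff _).mpr (Or.inr (Or.inl rfl))⟩
        · exact Or.inl ⟨rfl, (hiff _).mpr (Or.inr (Or.inr rfl))⟩
    rw [hset]
    refine Set.ncard_eq_three.mpr ⟨_, _, _, ?_, ?_, ?_, rfl⟩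
    · exact fun hE => hpq (congrArg Prod.snd hE)
    · exact fun hE => hpr (congrArg Prod.snd hE)
    · exact fun hE => hqr (congrArg Prod.snd hE)

lemma inflate_twoconn (hinj : Function.Injective enc) (hcub : IsCubic G)
    (htc : ∀ v : V, (G.induce ({v}ᶜ : Set V)).Connected) (w0 : V × Fin 9) :
    ((inflate G enc).induce ({w0}ᶜ : Set (V × Fin 9))).Connected := by
  obtain ⟨u0, x0⟩ := w0
  have copyW : ∀ (c : V) (x y : Fin 9), ∃ w : (inflate G enc).Walk (c, x) (c, y),
      ∀ p ∈ w.support, p.1 = c := by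
    intro c x y
    obtain ⟨w9⟩ := pgr_walk x y
    refine ⟨w9.map ⟨fun z => (c, z), fun h => Or.inl ⟨rfl, h⟩⟩, ?_⟩
    intro p hp
    rw [Walk.support_map, List.mem_map] at hp
    obtain ⟨z, -, rfl⟩ := hp
    rfl
  have lift : ∀ {d d' : V} (w : G.Walk d d') (x y : Fin 9),
      ∃ W : (inflate G enc).Walk (d, x) (d', y), ∀ p ∈ W.support, p.1 ∈ w.support := by
    intro d d' w
    induction w with
    | nil =>
      intro x y
      obtain ⟨W, hW⟩ := copyW _ x y
      exact ⟨W, fun p hp => by rw [hW p hp]; exact Walk.start_mem_support _⟩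
    | cons hab w ih =>
      rename_i a c d'
      intro x y
      obtain ⟨W1, hW1⟩ := copyW a x (port G enc a c)
      obtain ⟨W2, hW2⟩ := ih (port G enc c a) y
      refine ⟨W1.append (Walk.cons (inflate_adj_of enc hab rfl rfl) W2), ?_⟩
      intro p hp
      rw [Walk.mem_support_append_iff] at hp
      rcases hp with hp | hp
      · rw [Walk.support_cons, List.mem_cons]
        exact Or.inl (hW1 p hp)
      · rw [Walk.support_cons, List.mem_cons] at hp
        rcases hp with rfl | hp
        · rw [Walk.support_cons, List.mem_cons]; exact Or.inl rfl
        · rw [Walk.support_cons, List.mem_cons]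
          exact Or.inr (hW2 p hp)
  have esc : ∀ p : V × Fin 9, p ≠ (u0, x0) → ∃ (d : V) (y : Fin 9)
      (W : (inflate G enc).Walk p (d, y)), d ≠ u0 ∧ ∀ q ∈ W.support, q ≠ (u0, x0) := by
    rintro ⟨c, z⟩ hp
    by_cases hc : c = u0
    · subst hc
      have hz : z ≠ x0 := fun h => hp (by rw [h])
      obtain ⟨w9, hw9⟩ := pgr_del_walk x0 z hz
      obtain ⟨hex4, hexne⟩ := exitP_spec x0
      obtain ⟨v, hv, hport⟩ := port_surj hinj hcub c (exitP x0) hex4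
      refine ⟨v, port G enc v c,
        (w9.map ⟨fun t => (c, t), fun h => Or.inl ⟨rfl, h⟩⟩).append
          (Walk.cons (inflate_adj_of enc hv hport.symm rfl) Walk.nil),
        (G.ne_of_adj hv).symm, ?_⟩
      intro q hq
      rw [Walk.mem_support_append_iff] at hq
      rcases hq with hq | hq
      · rw [Walk.support_map, List.mem_map] at hq
        obtain ⟨t, ht, rfl⟩ := hq
        exact fun hEq => (hw9 t ht) (congrArg Prod.snd hEq)
      · rw [Walk.support_cons, List.mem_cons] at hq
        rcases hq with rfl | hq
        · exact fun hEq => hexne (congrArg Prod.snd hEq)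
        · simp only [Walk.support_nil, List.mem_singleton] at hq
          subst hq
          exact fun hEq => (G.ne_of_adj hv).symm (congrArg Prod.fst hEq)
    · exact ⟨c, z, Walk.nil, hc, by
        intro q hq
        simp only [Walk.support_nil, List.mem_singleton] at hq
        subst hq
        exact fun hEq => hc (congrArg Prod.fst hEq)⟩
  apply induce_connected
  · exact ⟨(u0, exitP x0), fun h => (exitP_spec x0).2 (congrArg Prod.snd h)⟩
  · intro a ha b hb
    obtain ⟨da, ya, Wa, hda, hWa⟩ := esc a ha
    obtain ⟨db, yb, Wb, hdb, hWb⟩ := esc b hb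
    obtain ⟨wI⟩ := (htc u0).preconnected ⟨da, hda⟩ ⟨db, hdb⟩
    obtain ⟨wG, hwG⟩ := walk_from_induce wI
    obtain ⟨Wm, hWm⟩ := lift wG ya yb
    refine ⟨Wa.append (Wm.append Wb.reverse), ?_⟩
    intro p hp
    rw [Walk.mem_support_append_iff, Walk.mem_support_append_iff, Walk.support_reverse,
      List.mem_reverse] at hp
    rcases hp with hp | hp | hp
    · exact hWa p hp
    · exact fun hEq => (hwG p.1 (hWm p hp)) (congrArg Prod.fst hEq)
    · exact hWb p hp

lemma hdeg_induce_univ (G : SimpleGraph V) (v : ↥(Set.univ : Set V)) :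
    hdeg (G.induce Set.univ) v = hdeg G v.1 := by
  have he : {w : ↥(Set.univ : Set V) | (G.induce Set.univ).Adj v w} ≃ {w : V | G.Adj v.1 w} :=
    { toFun := fun w => ⟨w.1.1, w.2⟩
      invFun := fun w => ⟨⟨w.1, trivial⟩, w.2⟩
      left_inv := fun w => rfl
      right_inv := fun w => rfl }
  rw [hdeg, hdeg, ← Nat.card_coe_set_eq, ← Nat.card_coe_set_eq]
  exact Nat.card_congr he

def isoDel (G : SimpleGraph V) (v : ↥(Set.univ : Set V)) :
    ((G.induce Set.univ).induce ({v}ᶜ : Set _)) ≃g (G.induce ({v.1}ᶜ : Set V)) where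
  toEquiv :=
    { toFun := fun p => ⟨p.1.1, fun hc => p.2 (Subtype.ext hc)⟩
      invFun := fun q => ⟨⟨q.1, trivial⟩, fun hc => q.2 (congrArg Subtype.val hc)⟩
      left_inv := fun p => rfl
      right_inv := fun q => rfl }
  map_rel_iff' := Iff.rfl

lemma good_frame (hconn : G.Connected) (hcub : IsCubic G)
    (htc : ∀ v : V, (G.induce ({v}ᶜ : Set V)).Connected) (hcard : 3 ≤ Nat.card V) :
    GoodFrameComponents G := by
  intro c
  right
  rw [supp_univ hconn c]
  refine ⟨⟨?_, ?_⟩, ?_⟩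
  · rw [Nat.card_congr (Equiv.Set.univ V)]; exact hcard
  · intro v
    exact (isoDel G v).connected_iff.mpr (htc v.1)
  · intro v
    exact (hdeg_induce_univ G v).trans (hcub v.1)

lemma conn_of_tree (G : SimpleGraph V) (r : V) (par : V → V) (rk : V → ℕ)
    (h : ∀ x, x = r ∨ (G.Adj x (par x) ∧ rk (par x) < rk x)) (hne : Nonempty V) :
    G.Connected := by
  rw [connected_iff]
  refine ⟨fun a b => ?_, hne⟩
  have H := tree_walk (G := G) (s := Set.univ) r par rk
    (fun z _ => by rcases h z with h | h; exacts [Or.inl h, Or.inr ⟨h.1, trivial, h.2⟩])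
  obtain ⟨wa, -⟩ := H a trivial
  obtain ⟨wb, -⟩ := H b trivial
  exact ⟨wa.append wb.reverse⟩

lemma del_conn_of_tree (G : SimpleGraph V) (v r : V) (par : V → V) (rk : V → ℕ) (hr : r ≠ v)
    (h : ∀ x, x ≠ v → x = r ∨ (G.Adj x (par x) ∧ par x ≠ v ∧ rk (par x) < rk x)) :
    (G.induce ({v}ᶜ : Set V)).Connected := by
  apply induce_connected ⟨r, hr⟩
  intro a ha b hb
  have H := tree_walk (G := G) (s := ({v}ᶜ : Set V)) r par rk (fun z hz => h z hz)
  obtain ⟨wa, hwa⟩ := H a ha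
  obtain ⟨wb, hwb⟩ := H b hb
  refine ⟨wa.append wb.reverse, ?_⟩
  intro x hx
  rw [Walk.mem_support_append_iff, Walk.support_reverse, List.mem_reverse] at hx
  rcases hx with hx | hx
  exacts [hwa x hx, hwb x hx]

end Main

/-! ### Section 7: assembly -/

structure GoodGE (A : GE) : Prop where
  inj : Function.Injective A.enc
  conn : A.G.Connected
  cubic : IsCubic A.G
  twoconn : ∀ v : A.V, (A.G.induce ({v}ᶜ : Set A.V)).Connected
  even : Even (Nat.card A.V)
  card3 : 3 ≤ Nat.card A.V

lemma good_step {A : GE} (h : GoodGE A) : GoodGE (step A) where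
  inj := fun p q hpq => by
    have h2 := Nat.pair_eq_pair.mp hpq
    exact Prod.ext (h.inj h2.1) (Fin.val_injective h2.2)
  conn := ((HH_connected h.conn).mono (HH_le _ _))
  cubic := inflate_cubic h.inj h.cubic
  twoconn := inflate_twoconn h.inj h.cubic h.twoconn
  even := by
    have : Nat.card (step A).V = Nat.card A.V * 9 := card_prod9
    rw [this]
    exact h.even.mul_right 9
  card3 := by
    have h2 : Nat.card (step A).V = Nat.card A.V * 9 := card_prod9
    rw [h2]
    calc 3 ≤ Nat.card A.V := h.card3
    _ ≤ Nat.card A.V * 9 := Nat.le_mul_of_pos_right _ (by norm_num)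

lemma rt10_ne : ∀ v : Fin 10, rt10 v ≠ v := by decide

lemma good_base : GoodGE (ItP10 0) where
  inj := Fin.val_injective
  conn := conn_of_tree Pet 0 par10w rk10w pet_tree ⟨0⟩
  cubic := by
    show ∀ v : Fin 10, {w | Pet.Adj v w}.ncard = 3
    intro v
    have hs : {w | Pet.Adj v w} = ((Finset.univ.filter (Pet.Adj v ·) : Finset (Fin 10)) : Set (Fin 10)) := by
      ext w; simp
    rw [hs, Set.ncard_coe_finset]
    exact pet_cubic_fin v
  twoconn := fun v =>
    del_conn_of_tree Pet v (rt10 v) (par10 v) (rk10 v) (rt10_ne v) (pet_del_tree v)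
  even := by
    have h10 : Nat.card (ItP10 0).V = 10 := by
      show Nat.card (Fin 10) = 10
      simp [Nat.card_eq_fintype_card]
    rw [h10]
    exact ⟨5, rfl⟩
  card3 := by
    have h10 : Nat.card (ItP10 0).V = 10 := by
      show Nat.card (Fin 10) = 10
      simp [Nat.card_eq_fintype_card]
    rw [h10]
    norm_num

lemma good_ItP10 : ∀ k, GoodGE (ItP10 k)
  | 0 => good_base
  | k + 1 => good_step (good_ItP10 k)

end F16

/-- `P₁₀ᵏ` is a frame of `P₁₀ᵏ⁺¹`. -/
theorem stmt_16 (k : ℕ) : IsFrame (ItP10 k).G (ItP10 (k + 1)).G := by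
  have h := F16.good_ItP10 k
  exact ⟨F16.good_frame h.conn h.cubic h.twoconn h.card3,
    F16.HH (ItP10 k).G (ItP10 k).enc, F16.HH_le _ _,
    F16.subdivision h.inj h.cubic,
    F16.HH_even h.even (F16.HH_connected h.conn)⟩
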